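/- Let Q be a probability distribution on a finite alphabet K with min_a Q(a) ≥ n^{−γ} for some 0 ≤ γ < 1/3, and Q^n the i.i.d. product distribution on K^n. Then for m ≥ nH(Q) + 2(log2 e/e)|K|n^{1−γ} + 2n^{1−3γ}·log2 e + O(1), there exists a function f : {0,1}^m → K^n such that the pushforward of the uniform distribution on {0,1}^m under f is ε-close in trace distance to Q^n with ε ≤ 3·exp(−2n^{1−3γ}). -/

import Mathlib

open Finset

theorem mgf_bound {K : Type*} [Fintype K] (Q Y : K → ℝ) (B t : ℝ) (hB : 0 < B)
    (hQ : ∀ a, 0 ≤ Q a) (hsum : ∑ a, Q a = 1) (hY : ∀ a, |Y a| ≤ B)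
    (hmean : ∑ a, Q a * Y a = 0) :
    ∑ a, Q a * Real.exp (t * Y a) ≤ Real.exp (t ^ 2 * B ^ 2 / 2) := by
  have key : ∀ a, Real.exp (t * Y a) ≤
      ((B + Y a) / (2 * B)) * Real.exp (t * B) + ((B - Y a) / (2 * B)) * Real.exp (-(t * B)) := by
    intro a
    have h1 : -B ≤ Y a := neg_le_of_abs_le (hY a)
    have h2 : Y a ≤ B := le_of_abs_le (hY a)
    have hl1 : (0:ℝ) ≤ (B + Y a) / (2 * B) := by
      apply div_nonneg (by linarith) (by linarith)
    have hl2 : (0:ℝ) ≤ (B - Y a) / (2 * B) := by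
      apply div_nonneg (by linarith) (by linarith)
    have hl3 : (B + Y a) / (2 * B) + (B - Y a) / (2 * B) = 1 := by
      field_simp; ring
    have := convexOn_exp.2 (Set.mem_univ (t * B)) (Set.mem_univ (-(t * B))) hl1 hl2 hl3
    simp only [smul_eq_mul] at this
    convert this using 2
    · rfl
    · rw [div_mul_eq_mul_div, div_mul_eq_mul_div, ← add_div, eq_div_iff (mul_pos two_pos hB).ne']; ring
  calc ∑ a, Q a * Real.exp (t * Y a)
      ≤ ∑ a, Q a * (((B + Y a) / (2 * B)) * Real.exp (t * B)
          + ((B - Y a) / (2 * B)) * Real.exp (-(t * B))) := by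
        apply Finset.sum_le_sum
        intro a _
        exact mul_le_mul_of_nonneg_left (key a) (hQ a)
    _ = Real.cosh (t * B) := by
        rw [Real.cosh_eq]
        have : ∀ a, Q a * (((B + Y a) / (2 * B)) * Real.exp (t * B)
            + ((B - Y a) / (2 * B)) * Real.exp (-(t * B)))
            = (Q a * (B + Y a)) * (Real.exp (t * B) / (2*B))
              + (Q a * (B - Y a)) * (Real.exp (-(t * B)) / (2*B)) := by
          intro a; field_simp
        simp_rw [this]
        rw [Finset.sum_add_distrib, ← Finset.sum_mul, ← Finset.sum_mul]
        have e1 : ∑ a, Q a * (B + Y a) = B := by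
          have h' : ∀ a, Q a * (B + Y a) = Q a * B + Q a * Y a := fun a => by ring
          simp_rw [h']
          rw [Finset.sum_add_distrib, ← Finset.sum_mul, hsum, hmean]; ring
        have e2 : ∑ a, Q a * (B - Y a) = B := by
          have h' : ∀ a, Q a * (B - Y a) = Q a * B - Q a * Y a := fun a => by ring
          simp_rw [h']
          rw [Finset.sum_sub_distrib, ← Finset.sum_mul, hsum, hmean]; ring
        rw [e1, e2]
        field_simp
    _ ≤ Real.exp ((t * B) ^ 2 / 2) := Real.cosh_le_exp_half_sq _
    _ = Real.exp (t ^ 2 * B ^ 2 / 2) := by rw [mul_pow]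

theorem fiber_assign {α β : Type*} [Fintype α] [Fintype β] [DecidableEq β]
    (c : β → ℕ) (hc : ∑ y, c y = Fintype.card α) :
    ∃ f : α → β, ∀ y, (Finset.univ.filter fun x => f x = y).card = c y := by
  have hcard : Fintype.card α = Fintype.card (Σ y : β, Fin (c y)) := by
    simp [Fintype.card_sigma, hc]
  let e : α ≃ Σ y : β, Fin (c y) := Fintype.equivOfCardEq hcard
  refine ⟨fun x => (e x).1, fun y => ?_⟩
  have h1 : (Finset.univ.filter fun x => (e x).1 = y).card
      = (Finset.univ.filter fun s : Σ y : β, Fin (c y) => s.1 = y).card := by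
    apply Finset.card_bij (fun x _ => e x)
    · intro a ha; simp at ha ⊢; exact ha
    · intro a _ b _ hab; exact e.injective hab
    · intro s hs; exact ⟨e.symm s, by simp at hs ⊢; exact hs, by simp⟩
  rw [h1, Finset.card_filter, ← Finset.univ_sigma_univ, Finset.sum_sigma]
  simp [apply_ite Finset.card, Finset.sum_ite_eq']

set_option maxHeartbeats 1000000

theorem chernoff {K : Type*} [Fintype K] [Nonempty K] [DecidableEq K]
    (Q : K → ℝ) (hQpos : ∀ a, 0 < Q a) (hsum : ∑ a, Q a = 1)
    (n : ℕ) (hn : 1 ≤ n) (B d : ℝ) (hB : 0 < B) (hd : 0 < d)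
    (hX : ∀ a, -Real.log (Q a) ≤ B) :
    ∑ y ∈ Finset.univ.filter (fun y : Fin n → K =>
        ∏ i, Q (y i) < Real.exp (-((n : ℝ) * (-∑ a, Q a * Real.log (Q a)) + d))),
      ∏ i, Q (y i) ≤ Real.exp (-d ^ 2 / (2 * n * B ^ 2)) := by
  set h : ℝ := -∑ a, Q a * Real.log (Q a) with hh
  set t : ℝ := d / (n * B ^ 2) with ht
  have hn0 : (0:ℝ) < n := by exact_mod_cast hn
  have htpos : 0 < t := by apply div_pos hd; positivity
  have hQ1 : ∀ a, Q a ≤ 1 := by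
    intro a
    rw [← hsum]
    exact Finset.single_le_sum (fun b _ => (hQpos b).le) (Finset.mem_univ a)
  have hX0 : ∀ a, 0 ≤ -Real.log (Q a) := by
    intro a
    exact neg_nonneg.mpr (Real.log_nonpos (hQpos a).le (hQ1 a))
  have hhB : 0 ≤ h ∧ h ≤ B := by
    constructor
    · rw [hh, ← Finset.sum_neg_distrib]
      apply Finset.sum_nonneg
      intro a _
      rw [← mul_neg]
      exact mul_nonneg (hQpos a).le (hX0 a)
    · rw [hh, ← Finset.sum_neg_distrib]
      calc ∑ a, -(Q a * Real.log (Q a)) = ∑ a, Q a * (-Real.log (Q a)) := by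
            simp [mul_neg]
        _ ≤ ∑ a, Q a * B := by
            apply Finset.sum_le_sum
            intro a _
            exact mul_le_mul_of_nonneg_left (hX a) (hQpos a).le
        _ = B := by rw [← Finset.sum_mul, hsum, one_mul]
  -- positivity of products
  have hppos : ∀ y : Fin n → K, 0 < ∏ i, Q (y i) := fun y =>
    Finset.prod_pos (fun i _ => hQpos (y i))
  -- step 1: insert exp factor
  have step1 : ∑ y ∈ Finset.univ.filter (fun y : Fin n → K =>
        ∏ i, Q (y i) < Real.exp (-((n : ℝ) * h + d))), ∏ i, Q (y i)
      ≤ Real.exp (-(t * ((n:ℝ) * h + d))) *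
          ∑ y : Fin n → K, (∏ i, Q (y i)) * Real.exp (t * (-Real.log (∏ i, Q (y i)))) := by
    rw [Finset.mul_sum]
    calc ∑ y ∈ Finset.univ.filter (fun y : Fin n → K =>
          ∏ i, Q (y i) < Real.exp (-((n : ℝ) * h + d))), ∏ i, Q (y i)
        ≤ ∑ y ∈ Finset.univ.filter (fun y : Fin n → K =>
            ∏ i, Q (y i) < Real.exp (-((n : ℝ) * h + d))),
            Real.exp (-(t * ((n:ℝ) * h + d))) *
              ((∏ i, Q (y i)) * Real.exp (t * (-Real.log (∏ i, Q (y i))))) := by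
          apply Finset.sum_le_sum
          intro y hy
          rw [Finset.mem_filter] at hy
          have hlog : Real.log (∏ i, Q (y i)) < -((n:ℝ) * h + d) := by
            calc Real.log (∏ i, Q (y i)) < Real.log (Real.exp (-((n : ℝ) * h + d))) :=
                  Real.log_lt_log (hppos y) hy.2
              _ = -((n : ℝ) * h + d) := Real.log_exp _
          have : (1:ℝ) ≤ Real.exp (-(t * ((n:ℝ) * h + d))) * Real.exp (t * (-Real.log (∏ i, Q (y i)))) := by
            rw [← Real.exp_add]
            apply Real.one_le_exp
            nlinarith
          nlinarith [hppos y, this]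
        _ ≤ ∑ y : Fin n → K, Real.exp (-(t * ((n:ℝ) * h + d))) *
              ((∏ i, Q (y i)) * Real.exp (t * (-Real.log (∏ i, Q (y i))))) := by
          apply Finset.sum_le_sum_of_subset_of_nonneg (Finset.filter_subset _ _)
          intro y _ _
          exact mul_nonneg (Real.exp_nonneg _) (mul_nonneg (hppos y).le (Real.exp_nonneg _))
  -- step 2: factorize
  have step2 : ∑ y : Fin n → K, (∏ i, Q (y i)) * Real.exp (t * (-Real.log (∏ i, Q (y i))))
      = (∑ a, Q a * Real.exp (t * (-Real.log (Q a)))) ^ n := by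
    have : ∀ y : Fin n → K, (∏ i, Q (y i)) * Real.exp (t * (-Real.log (∏ i, Q (y i))))
        = ∏ i, Q (y i) * Real.exp (t * (-Real.log (Q (y i)))) := by
      intro y
      rw [Finset.prod_mul_distrib]
      congr 1
      rw [← Real.exp_sum]
      congr 1
      rw [Real.log_prod (fun i _ => (hQpos (y i)).ne')]
      rw [← Finset.sum_neg_distrib, Finset.mul_sum]
    simp_rw [this]
    rw [← Fin.prod_const n (∑ a, Q a * Real.exp (t * (-Real.log (Q a))))]
    rw [Finset.prod_univ_sum]
    rw [Fintype.piFinset_univ]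
  -- step 3: single-letter bound
  have step3 : ∑ a, Q a * Real.exp (t * (-Real.log (Q a)))
      ≤ Real.exp (t * h + t ^ 2 * B ^ 2 / 2) := by
    have := mgf_bound Q (fun a => -Real.log (Q a) - h) B t hB (fun a => (hQpos a).le) hsum
      (fun a => by
        rw [abs_le]
        constructor
        · have := hX0 a; linarith [hhB.2]
        · have := hX a; linarith [hhB.1])
      (by
        simp_rw [mul_sub]
        rw [Finset.sum_sub_distrib, ← Finset.sum_mul, hsum, one_mul, hh]
        simp [mul_neg])
    calc ∑ a, Q a * Real.exp (t * (-Real.log (Q a)))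
        = Real.exp (t * h) * ∑ a, Q a * Real.exp (t * (-Real.log (Q a) - h)) := by
          rw [Finset.mul_sum]
          congr 1
          funext a
          have hexp : Real.exp (t * (-Real.log (Q a) - h)) * Real.exp (t * h)
              = Real.exp (t * -Real.log (Q a)) := by
            rw [← Real.exp_add]; congr 1; ring
          rw [← hexp]; ring
      _ ≤ Real.exp (t * h) * Real.exp (t ^ 2 * B ^ 2 / 2) := by
          apply mul_le_mul_of_nonneg_left this (Real.exp_nonneg _)
      _ = Real.exp (t * h + t ^ 2 * B ^ 2 / 2) := (Real.exp_add _ _).symm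
  -- combine
  calc ∑ y ∈ Finset.univ.filter (fun y : Fin n → K =>
        ∏ i, Q (y i) < Real.exp (-((n : ℝ) * h + d))), ∏ i, Q (y i)
      ≤ Real.exp (-(t * ((n:ℝ) * h + d))) *
          (∑ a, Q a * Real.exp (t * (-Real.log (Q a)))) ^ n := by
        rw [← step2]; exact step1
    _ ≤ Real.exp (-(t * ((n:ℝ) * h + d))) * Real.exp (t * h + t ^ 2 * B ^ 2 / 2) ^ n := by
        apply mul_le_mul_of_nonneg_left _ (Real.exp_nonneg _)
        apply pow_le_pow_left₀ _ step3
        apply Finset.sum_nonneg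
        intro a _
        exact mul_nonneg (hQpos a).le (Real.exp_nonneg _)
    _ = Real.exp (-(t * ((n:ℝ) * h + d)) + n * (t * h + t ^ 2 * B ^ 2 / 2)) := by
        rw [← Real.exp_nat_mul, ← Real.exp_add]
    _ = Real.exp (-d ^ 2 / (2 * n * B ^ 2)) := by
        congr 1
        rw [ht]
        field_simp
        ring

/-- Sampling an i.i.d. non-uniform distribution `Q^n` from
`m ≈ nH(Q) + O(n^{1-γ})` uniform bits, with error at most `3 exp(-2 n^{1-3γ})`,
provided `minₐ Q(a) ≥ n^{-γ}` with `0 ≤ γ < 1/3`. -/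
theorem sample_iid_from_uniform
    {K : Type*} [Fintype K] [Nonempty K] [DecidableEq K]
    (γ : ℝ) (hγ0 : 0 ≤ γ) (hγ1 : γ < 1 / 3) :
    ∃ C : ℝ, ∀ (n : ℕ), 1 ≤ n → ∀ Q : K → ℝ,
      (∀ a, 0 < Q a) → (∑ a, Q a = 1) →
      (∀ a, (n : ℝ) ^ (-γ) ≤ Q a) →
      ∀ m : ℕ,
        (n : ℝ) * (-∑ a, Q a * Real.logb 2 (Q a)) +
            2 * (Real.logb 2 (Real.exp 1) / Real.exp 1) * (Fintype.card K : ℝ) *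
              (n : ℝ) ^ ((1 : ℝ) - γ) +
            2 * (n : ℝ) ^ ((1 : ℝ) - 3 * γ) * Real.logb 2 (Real.exp 1) + C ≤ (m : ℝ) →
        ∃ f : (Fin m → Bool) → (Fin n → K),
          (1 / 2) * ∑ y : Fin n → K,
              |(((Finset.univ.filter fun x => f x = y).card : ℝ) / 2 ^ m) - ∏ i, Q (y i)|
            ≤ 3 * Real.exp (-2 * (n : ℝ) ^ ((1 : ℝ) - 3 * γ)) := by
  refine ⟨1, fun n hn Q hQpos hsum hmin m hm => ?_⟩
  have hnpos : (0:ℝ) < n := by exact_mod_cast hn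
  set s : ℝ := (n : ℝ) ^ ((1 : ℝ) - 3 * γ) with hs
  have hspos : 0 < s := Real.rpow_pos_of_pos hnpos _
  have hRHSpos : 0 < 3 * Real.exp (-2 * s) := by positivity
  -- trivial case : card K = 1
  by_cases hK1 : Fintype.card K ≤ 1
  · have hsub : Subsingleton K := Fintype.card_le_one_iff_subsingleton.mp hK1
    obtain ⟨a₀⟩ := ‹Nonempty K›
    have hQ1 : Q a₀ = 1 := by
      rw [← hsum]
      exact (Fintype.sum_subsingleton Q a₀).symm
    have hysub : Subsingleton (Fin n → K) := by infer_instance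
    refine ⟨fun _ _ => a₀, ?_⟩
    have : ∀ y : Fin n → K,
        |(((Finset.univ.filter fun x => (fun (_ : Fin m → Bool) (_ : Fin n) => a₀) x = y).card : ℝ)
          / 2 ^ m) - ∏ i, Q (y i)| = 0 := by
      intro y
      have hfil : (Finset.univ.filter fun x : Fin m → Bool =>
          (fun (_ : Fin m → Bool) (_ : Fin n) => a₀) x = y) = Finset.univ := by
        apply Finset.filter_true_of_mem
        intro x _
        exact Subsingleton.elim _ _
      rw [hfil, Finset.card_univ]
      have hcard : (Fintype.card (Fin m → Bool) : ℝ) = 2 ^ m := by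
        simp [Fintype.card_fun]
      have hprod : ∏ i, Q (y i) = 1 := by
        have : ∀ i, Q (y i) = 1 := fun i => by rw [Subsingleton.elim (y i) a₀, hQ1]
        simp [this]
      rw [hcard, hprod]
      simp
    rw [Finset.sum_congr rfl (fun y _ => this y)]
    simp
    positivity
  -- main case
  push_neg at hK1
  have hK2 : 2 ≤ Fintype.card K := hK1
  -- two distinct elements force n^{-γ} ≤ 1/2
  have hhalf : (n : ℝ) ^ (-γ) ≤ 1 / 2 := by
    obtain ⟨a, b, hab⟩ := Fintype.exists_pair_of_one_lt_card hK1
    have h2 : Q a + Q b ≤ 1 := by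
      rw [← hsum]
      rw [← Finset.sum_pair hab]
      apply Finset.sum_le_sum_of_subset_of_nonneg (Finset.subset_univ _)
      intro c _ _
      exact (hQpos c).le
    have := hmin a
    have := hmin b
    linarith
  set B : ℝ := γ * Real.log n with hB
  have hnexp : (n : ℝ) ^ (-γ) = Real.exp (-B) := by
    rw [Real.rpow_def_of_pos hnpos, hB]
    ring_nf
  have hBpos : 0 < B := by
    by_contra hc
    push_neg at hc
    have : (1:ℝ) ≤ Real.exp (-B) := Real.one_le_exp (by linarith)
    rw [← hnexp] at this
    linarith
  set h : ℝ := -∑ a, Q a * Real.log (Q a) with hh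
  set d : ℝ := 2 * (n : ℝ) ^ ((1 : ℝ) - 3/2 * γ) * B with hd
  have hdpos : 0 < d := by
    have := Real.rpow_pos_of_pos hnpos ((1 : ℝ) - 3/2 * γ)
    positivity
  have hX : ∀ a, -Real.log (Q a) ≤ B := by
    intro a
    have h1 : Real.exp (-B) ≤ Q a := hnexp ▸ hmin a
    have := Real.log_le_log (Real.exp_pos _) h1
    rw [Real.log_exp] at this
    linarith
  -- Chernoff bound
  have hcher := chernoff Q hQpos hsum n hn B d hBpos hdpos hX
  rw [← hh] at hcher
  have hd2 : -d ^ 2 / (2 * n * B ^ 2) = -(2 * s) := by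
    have h1 : (n:ℝ) ^ ((1:ℝ) - 3/2*γ) * (n:ℝ) ^ ((1:ℝ) - 3/2*γ) = (n:ℝ) ^ ((2:ℝ) - 3*γ) := by
      rw [← Real.rpow_add hnpos]
      congr 1
      ring
    have h2 : (n:ℝ) ^ ((2:ℝ) - 3*γ) = s * n := by
      rw [show ((2:ℝ) - 3*γ) = ((1:ℝ) - 3*γ) + 1 by ring, Real.rpow_add hnpos, Real.rpow_one]
    have h3 : d ^ 2 = 4 * (s * n) * B ^ 2 := by
      rw [hd]
      rw [show (2 * (n : ℝ) ^ ((1 : ℝ) - 3/2 * γ) * B) ^ 2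
          = 4 * ((n : ℝ) ^ ((1 : ℝ) - 3/2 * γ) * (n : ℝ) ^ ((1 : ℝ) - 3/2 * γ)) * B ^ 2 by ring,
        h1, h2]
    rw [h3]
    field_simp
    ring
  rw [hd2] at hcher
  -- the typical set
  set p : (Fin n → K) → ℝ := fun y => ∏ i, Q (y i) with hp
  have hppos : ∀ y, 0 < p y := fun y => Finset.prod_pos (fun i _ => hQpos (y i))
  set E : ℝ := Real.exp (-((n : ℝ) * h + d)) with hE
  set T : Finset (Fin n → K) := Finset.univ.filter (fun y => ¬ (p y < E)) with hT
  set Tc : Finset (Fin n → K) := Finset.univ.filter (fun y => p y < E) with hTc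
  have hcher' : ∑ y ∈ Tc, p y ≤ Real.exp (-(2 * s)) := hcher
  have hp1 : ∑ y, p y = 1 := by
    rw [hp]
    rw [show (1:ℝ) = ∏ _i : Fin n, ∑ a, Q a by simp [hsum]]
    rw [Finset.prod_univ_sum]
    rw [Fintype.piFinset_univ]
  have hsplit : ∑ y ∈ Tc, p y + ∑ y ∈ T, p y = 1 := by
    rw [← hp1, hTc, hT]
    exact Finset.sum_filter_add_sum_filter_not _ _ _
  -- T is nonempty
  have hTne : T.Nonempty := by
    rw [Finset.nonempty_iff_ne_empty]
    intro hTemp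
    rw [hTemp, Finset.sum_empty] at hsplit
    have : Real.exp (-(2*s)) < 1 := Real.exp_lt_one_iff.mpr (by linarith)
    linarith
  obtain ⟨y₀, hy₀⟩ := hTne
  -- membership facts
  have hmemT : ∀ y ∈ T, E ≤ p y := by
    intro y hy
    rw [hT, Finset.mem_filter] at hy
    exact not_lt.mp hy.2
  -- the counts
  set N : ℕ := 2 ^ m with hN
  have hNpos : 0 < N := by rw [hN]; positivity
  have hNR : (0:ℝ) < N := by exact_mod_cast hNpos
  set k : (Fin n → K) → ℕ := fun y => ⌊(N : ℝ) * p y⌋₊ with hk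
  have hTsum1 : ∑ y ∈ T, p y ≤ 1 := by
    have h0 : 0 ≤ ∑ y ∈ Tc, p y := Finset.sum_nonneg (fun y _ => (hppos y).le)
    linarith
  have hSle : ∑ y ∈ T, k y ≤ N := by
    have hreal : ((∑ y ∈ T, k y : ℕ) : ℝ) ≤ (N : ℝ) := by
      push_cast
      calc ∑ y ∈ T, (⌊(N : ℝ) * p y⌋₊ : ℝ) ≤ ∑ y ∈ T, (N : ℝ) * p y := by
            apply Finset.sum_le_sum
            intro y _
            exact Nat.floor_le (mul_nonneg hNR.le (hppos y).le)
        _ = (N : ℝ) * ∑ y ∈ T, p y := by rw [Finset.mul_sum]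
        _ ≤ (N : ℝ) * 1 := by
            apply mul_le_mul_of_nonneg_left hTsum1 (le_of_lt hNR)
        _ = (N : ℝ) := by ring
    exact_mod_cast hreal
  set c : (Fin n → K) → ℕ := fun y =>
    (if y ∈ T then k y else 0) + (if y = y₀ then N - ∑ z ∈ T, k z else 0) with hc
  have hcsum : ∑ y, c y = Fintype.card (Fin m → Bool) := by
    have h1 : ∑ y, (if y ∈ T then k y else 0) = ∑ y ∈ T, k y := by
      rw [Finset.sum_ite_mem, Finset.univ_inter]
    have h2 : ∑ y : Fin n → K, (if y = y₀ then N - ∑ z ∈ T, k z else 0)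
        = N - ∑ z ∈ T, k z := by
      rw [Finset.sum_ite_eq' Finset.univ y₀ (fun _ => N - ∑ z ∈ T, k z)]
      simp
    rw [hc, Finset.sum_add_distrib, h1, h2, Nat.add_sub_cancel' hSle]
    simp [Fintype.card_fun, hN]
  obtain ⟨f, hf⟩ := fiber_assign c hcsum
  refine ⟨f, ?_⟩
  -- rewrite counts
  set q : (Fin n → K) → ℝ := fun y => (c y : ℝ) / N with hq
  have hqsum : ∑ y, q y = 1 := by
    rw [hq, ← Finset.sum_div]
    rw [show ∑ y, ((c y : ℕ) : ℝ) = ((∑ y, c y : ℕ) : ℝ) by push_cast; rfl]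
    rw [hcsum]
    have : (Fintype.card (Fin m → Bool) : ℝ) = (N : ℝ) := by
      simp [Fintype.card_fun, hN]
    rw [this]
    field_simp
  have hqnn : ∀ y, 0 ≤ q y := fun y => by positivity
  have hcnt : ∀ y : Fin n → K,
      (((Finset.univ.filter fun x => f x = y).card : ℝ) / 2 ^ m) = q y := by
    intro y
    rw [hf y, hq]
    norm_num [hN]
  rw [Finset.sum_congr rfl (fun y _ => by rw [hcnt y])]
  -- TV identity : (1/2) ∑ |q - p| = ∑ max (p - q) 0
  have habs : ∀ x : ℝ, |x| = 2 * max (-x) 0 + x := by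
    intro x
    rcases le_total 0 x with hx | hx
    · rw [abs_of_nonneg hx, max_eq_right (by linarith)]
      ring
    · rw [abs_of_nonpos hx, max_eq_left (by linarith)]
      ring
  have hTV : (1/2 : ℝ) * ∑ y, |q y - p y| = ∑ y, max (p y - q y) 0 := by
    have : ∀ y, |q y - p y| = 2 * max (p y - q y) 0 + (q y - p y) := by
      intro y
      rw [habs (q y - p y)]
      ring_nf
    rw [Finset.sum_congr rfl (fun y _ => this y)]
    rw [Finset.sum_add_distrib, Finset.sum_sub_distrib, hqsum, hp1, ← Finset.mul_sum]
    ring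
  rw [hTV]
  -- bound the positive part sum
  have hbT : ∀ y ∈ T, max (p y - q y) 0 ≤ 1 / (N : ℝ) := by
    intro y hy
    have hky : ((k y : ℕ) : ℝ) ≤ (c y : ℝ) := by
      have : k y ≤ c y := by
        rw [hc]
        simp only []
        rw [if_pos hy]
        exact Nat.le_add_right _ _
      exact_mod_cast this
    have hfloor : (N : ℝ) * p y - 1 < ((k y : ℕ) : ℝ) := Nat.sub_one_lt_floor _
    have hqy : p y - 1 / (N : ℝ) ≤ q y := by
      rw [hq]
      dsimp only
      rw [le_div_iff₀ hNR]
      have hexpand : (p y - 1 / (N:ℝ)) * N = (N:ℝ) * p y - 1 := by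
        field_simp
      rw [hexpand]
      linarith
    apply max_le _ (le_of_lt (by positivity))
    linarith
  have hbTc : ∀ y ∈ Tc, max (p y - q y) 0 ≤ p y := by
    intro y _
    apply max_le _ (hppos y).le
    have := hqnn y
    linarith
  -- cardinality of T
  have hEpos : 0 < E := Real.exp_pos _
  have hTcard : (T.card : ℝ) ≤ Real.exp ((n : ℝ) * h + d) := by
    have h1 : (T.card : ℝ) * E ≤ ∑ y ∈ T, p y := by
      calc (T.card : ℝ) * E = ∑ _y ∈ T, E := by rw [Finset.sum_const, nsmul_eq_mul]
        _ ≤ ∑ y ∈ T, p y := Finset.sum_le_sum hmemT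
    have h2 : (T.card : ℝ) ≤ 1 / E := by
      rw [le_div_iff₀ hEpos]
      linarith
    rw [hE, Real.exp_neg, one_div, inv_inv] at h2
    exact h2
  -- the budget inequality
  have hlog2 : (0:ℝ) < Real.log 2 := Real.log_pos one_lt_two
  have hlogb : Real.logb 2 (Real.exp 1) = 1 / Real.log 2 := by
    rw [Real.logb, Real.log_exp]
  set K' : ℝ := (Fintype.card K : ℝ) with hK'
  set A0 : ℝ := 2 / Real.exp 1 * K' * (n : ℝ) ^ ((1:ℝ) - γ) with hA0
  have hn1γpos : (0:ℝ) < (n:ℝ) ^ ((1:ℝ) - γ) := Real.rpow_pos_of_pos hnpos _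
  have hH : (-∑ a, Q a * Real.logb 2 (Q a)) = h / Real.log 2 := by
    have h4 : ∑ a, Q a * Real.logb 2 (Q a) = (∑ a, Q a * Real.log (Q a)) / Real.log 2 := by
      rw [Finset.sum_div]
      congr 1
      funext a
      rw [Real.logb]
      ring
    rw [h4, hh]
    ring
  have hmm : (n:ℝ) * h + A0 + 2 * s + Real.log 2 ≤ (m:ℝ) * Real.log 2 := by
    rw [hH, hlogb] at hm
    have h5 := mul_le_mul_of_nonneg_right hm hlog2.le
    have h6 : ((n:ℝ) * (h / Real.log 2) +
        2 * ((1 / Real.log 2) / Real.exp 1) * K' * (n : ℝ) ^ ((1:ℝ) - γ) +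
        2 * s * (1 / Real.log 2) + 1) * Real.log 2
        = (n:ℝ) * h + A0 + 2 * s + Real.log 2 := by
      rw [hA0]
      field_simp
    rw [h6] at h5
    exact h5
  have hdA : d ≤ A0 := by
    have hxpos : (0:ℝ) < (n:ℝ) ^ (γ/2) := Real.rpow_pos_of_pos hnpos _
    have hloge : Real.log ((n:ℝ) ^ (γ/2)) ≤ (n:ℝ) ^ (γ/2) / Real.exp 1 := by
      have h7 := Real.log_le_sub_one_of_pos (show (0:ℝ) < (n:ℝ) ^ (γ/2) / Real.exp 1 by positivity)
      rw [Real.log_div (ne_of_gt hxpos) (Real.exp_ne_zero 1), Real.log_exp] at h7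
      linarith
    rw [Real.log_rpow hnpos] at hloge
    have hBle : B ≤ 2 / Real.exp 1 * (n:ℝ) ^ (γ/2) := by
      rw [hB]
      have h9 := mul_le_mul_of_nonneg_left hloge (by norm_num : (0:ℝ) ≤ 2)
      calc γ * Real.log n = 2 * (γ / 2 * Real.log n) := by ring
        _ ≤ 2 * ((n:ℝ) ^ (γ/2) / Real.exp 1) := h9
        _ = 2 / Real.exp 1 * (n:ℝ) ^ (γ/2) := by ring
    have hcomb : (n:ℝ) ^ ((1:ℝ) - 3/2*γ) * (n:ℝ) ^ (γ/2) = (n:ℝ) ^ ((1:ℝ) - γ) := by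
      rw [← Real.rpow_add hnpos]
      congr 1
      ring
    have hXpos : (0:ℝ) < (n:ℝ) ^ ((1:ℝ) - 3/2*γ) := Real.rpow_pos_of_pos hnpos _
    have hK2' : (2:ℝ) ≤ K' := by rw [hK']; exact_mod_cast hK2
    calc d = 2 * (n:ℝ) ^ ((1:ℝ) - 3/2*γ) * B := hd
      _ ≤ 2 * (n:ℝ) ^ ((1:ℝ) - 3/2*γ) * (2 / Real.exp 1 * (n:ℝ) ^ (γ/2)) := by
          apply mul_le_mul_of_nonneg_left hBle (by positivity)
      _ = 2 * (2 / Real.exp 1) * ((n:ℝ) ^ ((1:ℝ) - 3/2*γ) * (n:ℝ) ^ (γ/2)) := by ring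
      _ = 2 * (2 / Real.exp 1) * (n:ℝ) ^ ((1:ℝ) - γ) := by rw [hcomb]
      _ ≤ 2 / Real.exp 1 * K' * (n : ℝ) ^ ((1:ℝ) - γ) := by
          have he : (0:ℝ) < Real.exp 1 := Real.exp_pos 1
          have h8 : 2 * (2 / Real.exp 1) ≤ 2 / Real.exp 1 * K' := by
            have hpe : (0:ℝ) ≤ 2 / Real.exp 1 := by positivity
            calc 2 * (2 / Real.exp 1) = 2 / Real.exp 1 * 2 := by ring
              _ ≤ 2 / Real.exp 1 * K' := mul_le_mul_of_nonneg_left hK2' hpe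
          exact mul_le_mul_of_nonneg_right h8 hn1γpos.le
      _ = A0 := hA0.symm
  have hNcast : ((N:ℕ) : ℝ) = (2:ℝ) ^ m := by
    rw [hN]
    push_cast
    ring
  have hbudget : Real.exp ((n : ℝ) * h + d) ≤ 2 * Real.exp (-(2*s)) * N := by
    have hpos2 : (0:ℝ) < 2 * Real.exp (-(2*s)) * N := by positivity
    rw [← Real.exp_log hpos2]
    apply Real.exp_le_exp.mpr
    have hlogeq : Real.log (2 * Real.exp (-(2*s)) * N)
        = Real.log 2 + (-(2*s)) + (m:ℝ) * Real.log 2 := by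
      rw [Real.log_mul (by positivity) (by positivity),
        Real.log_mul (by norm_num) (Real.exp_ne_zero _), Real.log_exp, hNcast,
        Real.log_pow]
    rw [hlogeq]
    linarith
  -- final assembly
  have hfinal : ∑ y, max (p y - q y) 0
      ≤ Real.exp (-(2*s)) + 2 * Real.exp (-(2*s)) := by
    calc ∑ y, max (p y - q y) 0
        = ∑ y ∈ Tc, max (p y - q y) 0 + ∑ y ∈ T, max (p y - q y) 0 := by
          rw [hTc, hT]
          exact (Finset.sum_filter_add_sum_filter_not _ _ _).symm
      _ ≤ ∑ y ∈ Tc, p y + ∑ y ∈ T, (1 / (N:ℝ)) :=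
          add_le_add (Finset.sum_le_sum hbTc) (Finset.sum_le_sum hbT)
      _ = ∑ y ∈ Tc, p y + (T.card : ℝ) * (1 / (N:ℝ)) := by
          rw [Finset.sum_const, nsmul_eq_mul]
      _ ≤ Real.exp (-(2*s)) + 2 * Real.exp (-(2*s)) := by
          apply add_le_add hcher'
          rw [mul_one_div, div_le_iff₀ hNR]
          calc (T.card : ℝ) ≤ Real.exp ((n : ℝ) * h + d) := hTcard
            _ ≤ 2 * Real.exp (-(2*s)) * N := hbudget
  calc ∑ y, max (p y - q y) 0 ≤ Real.exp (-(2*s)) + 2 * Real.exp (-(2*s)) := hfinal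
    _ = 3 * Real.exp (-2 * s) := by
        rw [show -(2*s) = -2*s by ring]
        ring
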